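/- Let p be a prime, k ≥ 1 and n ≥ 1, and let δ : ℤ/p^kℤ → (ℤ/pℤ)^k be the base-p digit map, extended coordinatewise to a map δ : (ℤ/p^kℤ)^n → (ℤ/pℤ)^{nk}. For every u ∈ (ℤ/p^kℤ)^n and every index i with 0 ≤ i ≤ k−1, there exists a polynomial Q_i over ℤ/pℤ in nk variables of total degree at most (2p−2)^i such that for every a ∈ (ℤ/p^kℤ)^n, the i-th base-p digit of the scalar product a·u = ∑_{s=1}^n a_s u_s (computed in ℤ/p^kℤ) equals Q_i evaluated at δ(a). -/

import Mathlib

/-- The `i`-th base-`p` digit of the canonical representative of `x : ZMod (p ^ k)`,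
as an element of `ZMod p`. -/
def baseDigit (p k : ℕ) (i : ℕ) (x : ZMod (p ^ k)) : ZMod p :=
  (((x.val / p ^ i) % p : ℕ) : ZMod p)

open Finset Polynomial

lemma castDescF {R : Type*} [CommRing R] (m e : ℕ) :
    (m.descFactorial e : R) = ∏ j ∈ range e, ((m : R) - j) := by
  rcases lt_or_ge m e with h | h
  · rw [Nat.descFactorial_eq_zero_iff_lt.2 h, Finset.prod_eq_zero (Finset.mem_range.2 h)]
    · simp
    · simp
  · rw [Nat.descFactorial_eq_prod_range, Nat.cast_prod]
    refine Finset.prod_congr rfl fun j hj => ?_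
    have hjm : j ≤ m := le_trans (le_of_lt (Finset.mem_range.1 hj)) h
    push_cast [Nat.cast_sub hjm]
    ring

lemma lucasDigit (p : ℕ) [hp : Fact p.Prime] (N i : ℕ) :
    ((N / p ^ i % p : ℕ) : ZMod p) = (N.choose (p ^ i) : ZMod p) := by
  induction i generalizing N with
  | zero => simp [Nat.choose_one_right, ZMod.natCast_mod]
  | succ i ih =>
    have key := (Choose.choose_modEq_choose_mod_mul_choose_div (p := p)
      (n := N) (k := p ^ (i + 1)))
    have hmod : p ^ (i + 1) % p = 0 := by rw [pow_succ]; exact Nat.mul_mod_left _ _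
    have hdiv : p ^ (i + 1) / p = p ^ i := by
      rw [pow_succ, Nat.mul_div_assoc _ (dvd_refl p), Nat.div_self hp.out.pos, mul_one]
    rw [hmod, hdiv, Nat.choose_zero_right] at key
    have h2 : (N.choose (p ^ (i + 1)) : ZMod p) = ((N / p).choose (p ^ i) : ZMod p) := by
      have := (ZMod.intCast_eq_intCast_iff _ _ _).2 key
      push_cast at this
      rw [one_mul] at this
      exact_mod_cast this
    rw [h2, ← ih (N / p), Nat.div_div_eq_div_mul, ← pow_succ']

-- every function on ZMod p is a polynomial of degree ≤ p - 1
lemma interp (p : ℕ) [hp : Fact p.Prime] (f : ZMod p → ZMod p) :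
    ∃ q : Polynomial (ZMod p), q.natDegree ≤ p - 1 ∧ ∀ x, q.eval x = f x := by
  refine ⟨∑ y : ZMod p, Polynomial.C (f y) * (1 - (X - Polynomial.C y) ^ (p - 1)), ?_, ?_⟩
  · apply Polynomial.natDegree_sum_le_of_forall_le
    intro y _
    refine le_trans (Polynomial.natDegree_mul_le) ?_
    simp only [Polynomial.natDegree_C, zero_add]
    refine le_trans (Polynomial.natDegree_sub_le _ _) ?_
    simp only [Polynomial.natDegree_one]
    refine max_le (Nat.zero_le _) (le_trans (Polynomial.natDegree_pow_le) ?_)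
    have := Polynomial.natDegree_X_sub_C_le (y)
    calc (p-1) * (X - Polynomial.C y).natDegree ≤ (p-1) * 1 :=
          Nat.mul_le_mul_left _ this
      _ = p - 1 := mul_one _
  · intro x
    rw [Polynomial.eval_finset_sum]
    rw [Finset.sum_eq_single x]
    · simp [sub_self, zero_pow (Nat.sub_ne_zero_of_lt hp.out.one_lt)]
    · intro y _ hyx
      have hne : x - y ≠ 0 := sub_ne_zero_of_ne (Ne.symm hyx)
      simp [ZMod.pow_card_sub_one_eq_one hne]
    · simp

-- x ↦ choose (c * x.val) e  is a polynomial of degree ≤ e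
lemma univ_choose (p : ℕ) [hp : Fact p.Prime] (c e : ℕ) :
    ∃ q : Polynomial (ZMod p), q.natDegree ≤ e ∧
      ∀ x : ZMod p, q.eval x = ((c * x.val).choose e : ZMod p) := by
  rcases le_or_gt p e with he | he
  · obtain ⟨q, h1, h2⟩ := interp p (fun x => ((c * x.val).choose e : ZMod p))
    exact ⟨q, le_trans h1 (by omega), h2⟩
  · -- e < p : explicit product formula
    refine ⟨Polynomial.C (((e.factorial : ZMod p))⁻¹) *
      ∏ j ∈ Finset.range e, ((Polynomial.C (c : ZMod p)) * X - Polynomial.C (j : ZMod p)),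
      ?_, ?_⟩
    · refine le_trans (Polynomial.natDegree_mul_le) ?_
      simp only [Polynomial.natDegree_C, zero_add]
      refine le_trans (Polynomial.natDegree_prod_le _ _) ?_
      refine le_trans (Finset.sum_le_card_nsmul _ _ 1 ?_) (by simp)
      intro j _
      refine le_trans (Polynomial.natDegree_sub_le _ _) ?_
      refine max_le (le_trans Polynomial.natDegree_mul_le ?_) (by simp)
      simp
    · intro x
      have hfac : (e.factorial : ZMod p) ≠ 0 := by
        rw [Ne, ZMod.natCast_eq_zero_iff]
        intro hdvd
        exact absurd (Nat.Prime.dvd_factorial hp.out |>.1 hdvd) (by omega)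
      have hcx : ((c * x.val : ℕ) : ZMod p) = (c : ZMod p) * x := by
        push_cast [ZMod.natCast_val]
        simp [ZMod.cast_id]
      have hprod : ∏ j ∈ Finset.range e, ((c : ZMod p) * x - (j : ZMod p))
          = ((c * x.val).descFactorial e : ZMod p) := by
        rw [castDescF, hcx]
      simp only [Polynomial.eval_mul, Polynomial.eval_C, Polynomial.eval_prod,
        Polynomial.eval_sub, Polynomial.eval_mul, Polynomial.eval_X]
      rw [hprod, Nat.descFactorial_eq_factorial_mul_choose, Nat.cast_mul,
        ← mul_assoc, inv_mul_cancel₀ hfac, one_mul]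

open MvPolynomial in
lemma totalDegree_aeval_X {R : Type*} [CommRing R] {σ : Type*} (q : Polynomial R) (a : σ) :
    (Polynomial.aeval (MvPolynomial.X a : MvPolynomial σ R) q).totalDegree ≤ q.natDegree := by
  rw [Polynomial.aeval_def, Polynomial.eval₂_eq_sum, Polynomial.sum]
  refine le_trans (MvPolynomial.totalDegree_finset_sum _ _) ?_
  refine Finset.sup_le fun e he => ?_
  refine le_trans (MvPolynomial.totalDegree_mul _ _) ?_
  have h1 : (algebraMap R (MvPolynomial σ R) (q.coeff e)).totalDegree = 0 := by
    simp [MvPolynomial.totalDegree_C]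
  rw [h1, zero_add]
  refine le_trans (MvPolynomial.totalDegree_pow _ _) ?_
  have hX : (MvPolynomial.X a : MvPolynomial σ R).totalDegree ≤ 1 := by
    refine le_trans (MvPolynomial.totalDegree_monomial_le _ _) ?_
    simp
  refine le_trans (Nat.mul_le_mul_left e hX) ?_
  rw [mul_one]
  exact Polynomial.le_natDegree_of_mem_supp _ he

open MvPolynomial in
lemma eval_aeval_X {R : Type*} [CommRing R] {σ : Type*} (q : Polynomial R) (a : σ)
    (x : σ → R) :
    MvPolynomial.eval x (Polynomial.aeval (MvPolynomial.X a : MvPolynomial σ R) q)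
      = Polynomial.eval (x a) q := by
  induction q using Polynomial.induction_on' with
  | add f g hf hg => simp [hf, hg]
  | monomial d r => simp [Polynomial.aeval_monomial]

open MvPolynomial in
lemma mv_choose (p : ℕ) [hp : Fact p.Prime] {τ : Type*} [DecidableEq τ]
    (c : τ → ℕ) (s : Finset τ) :
    ∀ r : ℕ, ∃ Q : MvPolynomial τ (ZMod p), Q.totalDegree ≤ r ∧
      ∀ x : τ → ZMod p,
        (((∑ t ∈ s, c t * (x t).val).choose r : ℕ) : ZMod p) = MvPolynomial.eval x Q := by
  induction s using Finset.induction_on with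
  | empty =>
    intro r
    refine ⟨MvPolynomial.C ((Nat.choose 0 r : ℕ) : ZMod p), ?_, ?_⟩
    · exact le_trans (le_of_eq (MvPolynomial.totalDegree_C _)) (Nat.zero_le r)
    · intro x; simp
  | @insert a s ha ih =>
    intro r
    -- for each pair (i,j) with i + j = r, pick polynomials
    choose q hqdeg hqeval using fun i => univ_choose p (c a) i
    choose Q hQdeg hQeval using ih
    refine ⟨∑ ij ∈ Finset.HasAntidiagonal.antidiagonal r,
        (Polynomial.aeval (MvPolynomial.X a) (q ij.1)) * Q ij.2, ?_, ?_⟩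
    · refine le_trans (MvPolynomial.totalDegree_finset_sum _ _) ?_
      refine Finset.sup_le fun ij hij => ?_
      refine le_trans (MvPolynomial.totalDegree_mul _ _) ?_
      have h1 := le_trans (totalDegree_aeval_X (q ij.1) a) (hqdeg ij.1)
      have h2 := hQdeg ij.2
      have := Finset.HasAntidiagonal.mem_antidiagonal.1 hij
      omega
    · intro x
      rw [Finset.sum_insert ha, Nat.add_choose_eq]
      push_cast
      rw [map_sum]
      refine Finset.sum_congr rfl fun ij _ => ?_
      rw [map_mul, eval_aeval_X, hqeval, hQeval]

lemma digitSum (p : ℕ) (hp : 0 < p) (m : ℕ) :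
    ∀ k : ℕ, ∑ j ∈ Finset.range k, m / p ^ j % p * p ^ j = m % p ^ k := by
  intro k
  induction k with
  | zero => simp [Nat.mod_one]
  | succ k ih =>
    rw [Finset.sum_range_succ, ih]
    have hd : m % p ^ (k + 1) / p ^ k = m / p ^ k % p := by
      rw [pow_succ]
      exact Nat.mod_mul_right_div_self m (p ^ k) p
    have hm : m % p ^ (k + 1) % p ^ k = m % p ^ k :=
      Nat.mod_mod_of_dvd m (pow_dvd_pow p (Nat.le_succ k))
    have key : m % p ^ (k + 1) = p ^ k * (m / p ^ k % p) + m % p ^ k := by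
      conv_lhs => rw [← Nat.div_add_mod (m % p ^ (k + 1)) (p ^ k)]
      rw [hd, hm]
    rw [key]; ring

theorem stmt_10 (p : ℕ) (hp : p.Prime) (k n : ℕ) (hk : 1 ≤ k) (hn : 1 ≤ n)
    (u : Fin n → ZMod (p ^ k)) (i : ℕ) (hi : i < k) :
    ∃ Q : MvPolynomial (Fin n × Fin k) (ZMod p),
      Q.totalDegree ≤ (2 * p - 2) ^ i ∧
        ∀ a : Fin n → ZMod (p ^ k),
          baseDigit p k i (∑ s, a s * u s) =
            MvPolynomial.eval (fun v => baseDigit p k (v.2 : ℕ) (a v.1)) Q := by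
  haveI : Fact p.Prime := ⟨hp⟩
  haveI : NeZero (p ^ k) := ⟨pow_ne_zero _ hp.pos.ne'⟩
  set c : Fin n × Fin k → ℕ := fun v => (u v.1).val * p ^ (v.2 : ℕ) with hc
  obtain ⟨Q, hQdeg, hQeval⟩ := mv_choose p c Finset.univ (p ^ i)
  refine ⟨Q, ?_, ?_⟩
  · refine le_trans hQdeg (Nat.pow_le_pow_left ?_ i)
    have := hp.two_le; omega
  · intro a
    set x : Fin n × Fin k → ZMod p := fun v => baseDigit p k (v.2 : ℕ) (a v.1) with hxdef
    set d : Fin n × Fin k → ℕ := fun v => (a v.1).val / p ^ (v.2 : ℕ) % p with hddef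
    have hdlt : ∀ v, d v < p := fun v => Nat.mod_lt _ hp.pos
    have hxval : ∀ v, (x v).val = d v := by
      intro v
      rw [hxdef]
      show (((d v : ℕ) : ZMod p)).val = d v
      rw [ZMod.val_natCast, Nat.mod_eq_of_lt (hdlt v)]
    set S : ℕ := ∑ v : Fin n × Fin k, c v * d v with hSdef
    -- S equals the scalar product as integers (mod p^k)
    have hSnat : S = ∑ s : Fin n, (u s).val * (a s).val := by
      rw [hSdef, Fintype.sum_prod_type]
      refine Finset.sum_congr rfl fun s _ => ?_
      have : ∀ j : Fin k, c (s, j) * d (s, j)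
          = (u s).val * ((a s).val / p ^ (j : ℕ) % p * p ^ (j : ℕ)) := by
        intro j; rw [hc, hddef]; ring
      rw [Finset.sum_congr rfl fun j _ => this j, ← Finset.mul_sum]
      congr 1
      rw [Fin.sum_univ_eq_sum_range (fun j => (a s).val / p ^ j % p * p ^ j) k,
        digitSum p hp.pos, Nat.mod_eq_of_lt (ZMod.val_lt _)]
    have hScast : ((S : ℕ) : ZMod (p ^ k)) = ∑ s, a s * u s := by
      rw [hSnat]
      push_cast [ZMod.natCast_val, ZMod.cast_id]
      exact Finset.sum_congr rfl fun s _ => mul_comm _ _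
    have hval : (∑ s, a s * u s).val = S % p ^ k := by
      rw [← hScast, ZMod.val_natCast]
    have hdig : S % p ^ k / p ^ i % p = S / p ^ i % p := by
      have hsplit : p ^ k = p ^ i * p ^ (k - i) := by
        rw [← pow_add]; congr 1; omega
      rw [hsplit, Nat.mod_mul_right_div_self,
        Nat.mod_mod_of_dvd _ (dvd_pow_self p (by omega : k - i ≠ 0))]
    have hS_eq : ∑ t : Fin n × Fin k, c t * (x t).val = S := by
      rw [hSdef]
      exact Finset.sum_congr rfl fun t _ => by rw [hxval]
    have := hQeval x
    rw [hS_eq] at this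
    rw [show baseDigit p k i (∑ s, a s * u s)
        = ((((∑ s, a s * u s).val / p ^ i) % p : ℕ) : ZMod p) from rfl,
      hval, hdig, lucasDigit p S i]
    exact this
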